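/- arXiv:1910.05204 — 3 statements merged into one kernel-verified Lean document; each statement's English description precedes it below -/
import Mathlib

section
/- With c^m_{μ,k} = ((−1)^k/k!)·(m!/(m−μ)!)·H_k(μ), one has for all m ≥ 0, k ≥ 1 and 1 ≤ μ ≤ m: k·c^m_{μ,k} − (m−μ+1)·c^m_{μ−1,k} + c^m_{μ,k−1} = 0. -/
open Finset

/-- Multiple harmonic sum `H_k(μ)`. -/
def mharm (k μ : ℕ) : ℚ :=
  ∑ f ∈ Finset.univ.filter (fun f : Fin μ → Fin k => ∀ i j, i ≤ j → f i ≤ f j),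
    ∏ i, (1 : ℚ) / ((f i : ℕ) + 1)

lemma mharm_split (k μ : ℕ) :
    mharm (k+1) (μ+1) = mharm k (μ+1) + (1/((k:ℚ)+1)) * mharm (k+1) μ := by
  classical
  rw [mharm,
    ← Finset.sum_filter_add_sum_filter_not _ (fun f => f (Fin.last μ) ≠ Fin.last k)]
  congr 1
  · -- part mapping into Fin k
    rw [mharm]
    have key : ∀ f : Fin (μ+1) → Fin (k+1),
        f ∈ (Finset.univ.filter (fun f : Fin (μ+1) → Fin (k+1) => ∀ i j, i ≤ j → f i ≤ f j)).filter
          (fun f => f (Fin.last μ) ≠ Fin.last k) → ∀ j, (f j : ℕ) < k := by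
      intro f hf j
      simp only [Finset.mem_filter, Finset.mem_univ, true_and] at hf
      have h1 : f j ≤ f (Fin.last μ) := hf.1 j (Fin.last μ) (Fin.le_last j)
      have h2 : (f (Fin.last μ) : ℕ) < k := Fin.val_lt_last hf.2
      exact lt_of_le_of_lt h1 h2
    refine Finset.sum_bij' (fun f hf => fun j : Fin (μ+1) =>
        (⟨(f j : ℕ), key f hf j⟩ : Fin k)) (fun g _ => fun j => Fin.castSucc (g j))
        ?_ ?_ ?_ ?_ ?_
    · intro f hf
      simp only [Finset.mem_filter, Finset.mem_univ, true_and] at hf ⊢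
      intro i j hij
      exact hf.1 i j hij
    · intro g hg
      simp only [Finset.mem_filter, Finset.mem_univ, true_and] at hg ⊢
      constructor
      · intro i j hij
        exact Fin.castSucc_le_castSucc_iff.mpr (hg i j hij)
      · exact ne_of_lt (Fin.castSucc_lt_last _)
    · intro f hf; funext j; simp [Fin.ext_iff]
    · intro g hg; funext j; simp [Fin.ext_iff]
    · intro f hf; simp
  · -- part with f last = last
    rw [mharm, Finset.mul_sum]
    simp only [not_not]
    refine Finset.sum_bij' (fun f _ => fun j : Fin μ => f (Fin.castSucc j))
        (fun g _ => Fin.snoc g (Fin.last k)) ?_ ?_ ?_ ?_ ?_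
    · intro f hf
      simp only [Finset.mem_filter, Finset.mem_univ, true_and] at hf ⊢
      intro i j hij
      exact hf.1 _ _ (Fin.castSucc_le_castSucc_iff.mpr hij)
    · intro g hg
      simp only [Finset.mem_filter, Finset.mem_univ, true_and] at hg ⊢
      constructor
      · intro i j hij
        rcases Fin.eq_castSucc_or_eq_last j with ⟨j', rfl⟩ | rfl
        · rcases Fin.eq_castSucc_or_eq_last i with ⟨i', rfl⟩ | rfl
          · rw [Fin.snoc_castSucc, Fin.snoc_castSucc]
            exact hg i' j' (Fin.castSucc_le_castSucc_iff.mp hij)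
          · exact absurd hij (not_le.mpr (Fin.castSucc_lt_last j'))
        · rw [Fin.snoc_last]; exact Fin.le_last _
      · exact Fin.snoc_last _ _
    · intro f hf
      simp only [Finset.mem_filter, Finset.mem_univ, true_and] at hf
      funext j
      rcases Fin.eq_castSucc_or_eq_last j with ⟨j', rfl⟩ | rfl
      · simp [Fin.snoc_castSucc]
      · simp [Fin.snoc_last, hf.2]
    · intro g hg; funext j; simp [Fin.snoc_castSucc]
    · intro f hf
      simp only [Finset.mem_filter, Finset.mem_univ, true_and] at hf
      rw [Fin.prod_univ_castSucc, hf.2]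
      simp only [Fin.val_last]
      ring

/-- `c^m_{μ,k} = ((−1)^k/k!)·(m!/(m−μ)!)·H_k(μ)`. -/
def cBM (m μ k : ℕ) : ℚ :=
  ((-1) ^ k / (k.factorial : ℚ)) * ((m.factorial : ℚ) / ((m - μ).factorial : ℚ)) * mharm k μ

theorem cBM_recurrence (m μ k : ℕ) (hk : 1 ≤ k) (hμ1 : 1 ≤ μ) (hμm : μ ≤ m) :
    (k : ℚ) * cBM m μ k - ((m : ℚ) - μ + 1) * cBM m (μ - 1) k + cBM m μ (k - 1) = 0 := by
  obtain ⟨k, rfl⟩ := Nat.exists_eq_add_of_le hk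
  obtain ⟨μ, rfl⟩ := Nat.exists_eq_add_of_le hμ1
  obtain ⟨d, hd⟩ := Nat.exists_eq_add_of_le hμm
  have hmμ : m - (1 + μ) = d := by omega
  have hmμ' : m - μ = d + 1 := by omega
  have hμ1' : 1 + μ - 1 = μ := by omega
  have hk1 : 1 + k - 1 = k := by omega
  have hrec := mharm_split k (μ)
  have hm : (m : ℚ) = (1 : ℚ) + μ + d := by push_cast [hd]; ring
  rw [show 1 + μ = μ + 1 by ring, show 1 + k = k + 1 by ring] at *
  simp only [cBM, hmμ, hmμ', hμ1', hk1, Nat.add_sub_cancel] at *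
  rw [hrec, hm]
  have hkf : ((k+1).factorial : ℚ) = (k+1) * k.factorial := by
    push_cast [Nat.factorial_succ]; ring
  have hdf : ((d+1).factorial : ℚ) = (d+1) * d.factorial := by
    push_cast [Nat.factorial_succ]; ring
  have hk0 : ((k : ℚ) + 1) ≠ 0 := by positivity
  have hkf0 : (k.factorial : ℚ) ≠ 0 := Nat.cast_ne_zero.mpr k.factorial_ne_zero
  have hdf0 : (d.factorial : ℚ) ≠ 0 := Nat.cast_ne_zero.mpr d.factorial_ne_zero
  rw [hkf, hdf]
  push_cast
  field_simp
  ring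
end

section
/- For each fixed k ≥ 0, the exponential generating function identity ∑_{m≥0} (S_{m,k}(x)/m!) s^m = ((−1)^k/k!)·F_k(s)·e^{sx}/(Γ(s−k)(e^{2πis}−1)) holds, where S_{m,k}(x) = ∑_{μ=0}^m {}_μQ_k(x)·c^m_{m−μ,k}. -/
open Finset Complex Real

lemma mharm_nonneg (k μ : ℕ) : 0 ≤ mharm k μ := by
  apply Finset.sum_nonneg
  intro f _
  apply Finset.prod_nonneg
  intro i _
  positivity

lemma mharm_le (k μ : ℕ) : mharm k μ ≤ (k : ℚ) ^ μ := by
  calc mharm k μ ≤ (Finset.univ.filter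
        (fun f : Fin μ → Fin k => ∀ i j, i ≤ j → f i ≤ f j)).card • (1 : ℚ) := by
        apply Finset.sum_le_card_nsmul
        intro f _
        apply Finset.prod_le_one
        · intro i _; positivity
        · intro i _
          rw [div_le_one (by positivity)]
          have : (0:ℚ) ≤ ((f i : ℕ) : ℚ) := by positivity
          linarith
    _ ≤ (Finset.univ : Finset (Fin μ → Fin k)).card • (1 : ℚ) := by
        have h := Finset.card_filter_le (Finset.univ : Finset (Fin μ → Fin k))
          (fun f : Fin μ → Fin k => ∀ i j, i ≤ j → f i ≤ f j)
        have h2 : ((Finset.univ.filter (fun f : Fin μ → Fin k =>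
            ∀ i j, i ≤ j → f i ≤ f j)).card : ℚ) ≤
            ((Finset.univ : Finset (Fin μ → Fin k)).card : ℚ) := by exact_mod_cast h
        simpa using h2
    _ = (k : ℚ) ^ μ := by simp [Finset.card_univ]

lemma real_not_int {u : ℝ} (h0 : 0 < u) (h1 : u < 1) (z : ℤ) : u ≠ (z : ℝ) := by
  intro h
  rcases le_or_gt z 0 with hz | hz
  · have : (z : ℝ) ≤ 0 := by exact_mod_cast hz
    linarith
  · have : (1 : ℝ) ≤ (z : ℝ) := by exact_mod_cast hz
    linarith

lemma term_eq (k m : ℕ) (x s : ℂ) (Q : ℕ → ℂ → ℂ) :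
    (∑ μ ∈ Finset.range (m + 1), Q μ x * (cBM m (m - μ) k : ℂ)) / (m.factorial : ℂ) * s ^ m
    = ((-1) ^ k / (k.factorial : ℂ)) *
        ∑ ij ∈ Finset.HasAntidiagonal.antidiagonal m,
          ((mharm k ij.1 : ℂ) * s ^ ij.1) * (Q ij.2 x / (ij.2.factorial : ℂ) * s ^ ij.2) := by
  rw [Finset.Nat.sum_antidiagonal_eq_sum_range_succ_mk]
  rw [← Finset.sum_range_reflect (fun μ => Q μ x * (cBM m (m - μ) k : ℂ)) (m+1)]
  rw [Finset.sum_div, Finset.sum_mul, Finset.mul_sum]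
  apply Finset.sum_congr rfl
  intro j hj
  have hj' : j ≤ m := by
    have := Finset.mem_range.1 hj; omega
  have h1 : m + 1 - 1 - j = m - j := by omega
  have h2 : m - (m - j) = j := by omega
  rw [h1, h2]
  have hcast : ((cBM m j k : ℚ) : ℂ)
      = ((-1) ^ k / (k.factorial : ℂ)) * ((m.factorial : ℂ) / ((m - j).factorial : ℂ))
        * (mharm k j : ℂ) := by
    push_cast [cBM]
    ring
  rw [hcast]
  have hspow : s ^ j * s ^ (m - j) = s ^ m := by
    rw [← pow_add]
    congr 1
    omega
  have hm : (m.factorial : ℂ) ≠ 0 := by exact_mod_cast m.factorial_ne_zero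
  have hmj : ((m - j).factorial : ℂ) ≠ 0 := by exact_mod_cast (m-j).factorial_ne_zero
  rw [← hspow]
  field_simp

set_option maxHeartbeats 1000000 in
/-- Suppose `Q m x` are the Taylor coefficients (times `m!`) of
`e^{(s+k)x}/(Γ(s)(e^{2πis}−1))` at `s = −k`.  Then with
`S_{m,k}(x) = ∑_{μ=0}^m {}_μQ_k(x)·c^m_{m−μ,k}` and `F_k(s) = ∑_μ H_k(μ) s^μ`,
one has `∑_{m≥0}(S_{m,k}(x)/m!) s^m = ((−1)^k/k!)·F_k(s)·e^{sx}/(Γ(s−k)(e^{2πis}−1))`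
as a Taylor expansion in `s` at `s = 0` (on a punctured disc). -/
theorem S_gen_fun_identity (k : ℕ) (Q : ℕ → ℂ → ℂ)
    (hQ : ∀ x : ℂ, ∃ r > (0 : ℝ), ∀ s : ℂ, 0 < ‖s + (k : ℂ)‖ → ‖s + (k : ℂ)‖ < r →
      Complex.exp ((s + k) * x) /
          (Complex.Gamma s * (Complex.exp (2 * Real.pi * Complex.I * s) - 1)) =
        ∑' m : ℕ, (Q m x / (m.factorial : ℂ)) * (s + k) ^ m) :
    ∀ x : ℂ, ∃ r > (0 : ℝ), ∀ s : ℂ, 0 < ‖s‖ → ‖s‖ < r →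
      ∑' m : ℕ, ((∑ μ ∈ Finset.range (m + 1), Q μ x * (cBM m (m - μ) k : ℂ)) /
          (m.factorial : ℂ)) * s ^ m =
        ((-1) ^ k / (k.factorial : ℂ)) * (∑' μ : ℕ, (mharm k μ : ℂ) * s ^ μ) *
          (Complex.exp (s * x) /
            (Complex.Gamma (s - k) * (Complex.exp (2 * Real.pi * Complex.I * s) - 1))) := by
  intro x
  obtain ⟨r₀, hr₀, hser⟩ := hQ x
  set ρ : ℝ := min r₀ 1 / 2 with hρdef
  have hmin : 0 < min r₀ 1 := lt_min hr₀ one_pos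
  have hρ0 : 0 < ρ := by positivity
  have hρhalf : ρ ≤ 1 / 2 := by
    have := min_le_right r₀ 1
    rw [hρdef]; linarith
  have hρlt1 : ρ < 1 := by linarith
  have hρltr₀ : ρ < r₀ := by
    have := min_le_left r₀ 1
    rw [hρdef]; linarith
  -- the point s₀ = ρ - k
  set s₀ : ℂ := (ρ : ℂ) - k with hs₀def
  have hs₀k : s₀ + k = (ρ : ℂ) := by rw [hs₀def]; ring
  have hnorms₀ : ‖s₀ + (k : ℂ)‖ = ρ := by
    rw [hs₀k, Complex.norm_real, Real.norm_eq_abs, abs_of_pos hρ0]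
  have hval := hser s₀ (by rw [hnorms₀]; exact hρ0) (by rw [hnorms₀]; exact hρltr₀)
  -- the value of the function at s₀ is nonzero
  have h2piI : (2 * (π : ℂ) * I) ≠ 0 := by
    simp [Real.pi_ne_zero, Complex.I_ne_zero]
  have hΓ : Complex.Gamma s₀ ≠ 0 := by
    apply Complex.Gamma_ne_zero
    intro m hm
    have hρeq : (ρ : ℂ) = (((k : ℤ) - (m : ℤ) : ℤ) : ℂ) := by
      push_cast
      rw [hs₀def] at hm
      linear_combination hm
    have : ρ = (((k : ℤ) - (m : ℤ) : ℤ) : ℝ) := by exact_mod_cast hρeq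
    exact real_not_int hρ0 hρlt1 _ this
  have hE : Complex.exp (2 * Real.pi * Complex.I * s₀) - 1 ≠ 0 := by
    rw [sub_ne_zero]
    intro h
    obtain ⟨n, hn⟩ := Complex.exp_eq_one_iff.1 h
    have hs₀n : s₀ = (n : ℂ) := by
      apply mul_left_cancel₀ h2piI
      rw [show (2 * (π:ℂ) * I) * s₀ = 2 * (π:ℝ) * I * s₀ by push_cast; ring, hn]
      ring
    have hρeq : (ρ : ℂ) = ((n + (k : ℤ) : ℤ) : ℂ) := by
      push_cast
      rw [hs₀def] at hs₀n
      linear_combination hs₀n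
    have : ρ = ((n + (k : ℤ) : ℤ) : ℝ) := by exact_mod_cast hρeq
    exact real_not_int hρ0 hρlt1 _ this
  have hvne : Complex.exp ((s₀ + k) * x) /
      (Complex.Gamma s₀ * (Complex.exp (2 * Real.pi * Complex.I * s₀) - 1)) ≠ 0 :=
    div_ne_zero (Complex.exp_ne_zero _) (mul_ne_zero hΓ hE)
  -- summability at s₀ + k = ρ
  have hsum0 : Summable (fun m : ℕ => Q m x / (m.factorial : ℂ) * (s₀ + k) ^ m) := by
    by_contra h
    rw [tsum_eq_zero_of_not_summable h] at hval
    exact hvne hval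
  rw [hs₀k] at hsum0
  -- bound the coefficients
  have hbdd : BddAbove (Set.range fun m : ℕ => ‖Q m x / (m.factorial : ℂ) * (ρ : ℂ) ^ m‖) := by
    have h0 := hsum0.tendsto_atTop_zero
    have h1 : Filter.Tendsto (fun m : ℕ => ‖Q m x / (m.factorial : ℂ) * (ρ : ℂ) ^ m‖)
        Filter.atTop (nhds 0) := by
      simpa using h0.norm
    exact h1.bddAbove_range
  obtain ⟨C, hC⟩ := hbdd
  have hCb : ∀ m : ℕ, ‖Q m x / (m.factorial : ℂ)‖ * ρ ^ m ≤ C := by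
    intro m
    have := hC (Set.mem_range_self m)
    rwa [norm_mul, norm_pow, Complex.norm_real, Real.norm_eq_abs, abs_of_pos hρ0] at this
  -- choose the radius
  refine ⟨min ρ (1 / (2 * ((k : ℝ) + 1))), lt_min hρ0 (by positivity), ?_⟩
  intro s hs0 hsr
  have hsρ : ‖s‖ < ρ := lt_of_lt_of_le hsr (min_le_left _ _)
  have hsk : ((k : ℝ) + 1) * ‖s‖ < 1 := by
    have h := lt_of_lt_of_le hsr (min_le_right _ _)
    have hk1 : (0:ℝ) < (k : ℝ) + 1 := by positivity
    calc ((k : ℝ) + 1) * ‖s‖ < ((k : ℝ) + 1) * (1 / (2 * ((k : ℝ) + 1))) :=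
          mul_lt_mul_of_pos_left h hk1
      _ = 1 / 2 := by field_simp
      _ < 1 := by norm_num
  -- summability of the two factors in norm
  have hA : Summable (fun μ : ℕ => ‖(mharm k μ : ℂ) * s ^ μ‖) := by
    refine Summable.of_nonneg_of_le (fun n => norm_nonneg _) ?_
      (summable_geometric_of_lt_one (by positivity) hsk)
    intro μ
    rw [norm_mul, norm_pow, mul_pow]
    apply mul_le_mul_of_nonneg_right _ (by positivity)
    have he : ((mharm k μ : ℚ) : ℂ) = (((mharm k μ : ℚ) : ℝ) : ℂ) := by norm_cast
    rw [he, Complex.norm_real, Real.norm_eq_abs,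
      _root_.abs_of_nonneg (by exact_mod_cast mharm_nonneg k μ :
        (0:ℝ) ≤ ((mharm k μ : ℚ) : ℝ))]
    have h2 : ((mharm k μ : ℚ) : ℝ) ≤ (((k : ℚ) : ℝ)) ^ μ := by exact_mod_cast mharm_le k μ
    calc ((mharm k μ : ℚ) : ℝ) ≤ ((k : ℝ)) ^ μ := by simpa using h2
      _ ≤ ((k : ℝ) + 1) ^ μ := by
          apply pow_le_pow_left₀ (by positivity)
          linarith
  have hgeom : Summable (fun m : ℕ => C * (‖s‖ / ρ) ^ m) := by
    apply Summable.mul_left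
    apply summable_geometric_of_lt_one (by positivity)
    rw [div_lt_one hρ0]
    exact hsρ
  have hB : Summable (fun m : ℕ => ‖Q m x / (m.factorial : ℂ) * s ^ m‖) := by
    refine Summable.of_nonneg_of_le (fun n => norm_nonneg _) ?_ hgeom
    intro m
    rw [norm_mul, norm_pow]
    have he : ‖s‖ ^ m = ρ ^ m * (‖s‖ / ρ) ^ m := by
      rw [← mul_pow]
      congr 1
      field_simp
    rw [he, ← mul_assoc]
    exact mul_le_mul_of_nonneg_right (hCb m) (by positivity)
  -- Cauchy product
  have key := tsum_mul_tsum_eq_tsum_sum_antidiagonal_of_summable_norm hA hB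
  -- closed form of the Q-series at s
  have hnorm : ‖(s - (k : ℂ)) + (k : ℂ)‖ = ‖s‖ := by rw [sub_add_cancel]
  have hG := hser (s - k) (by rw [hnorm]; exact hs0)
    (by rw [hnorm]; exact lt_trans hsρ hρltr₀)
  rw [sub_add_cancel] at hG
  have hexp : Complex.exp (2 * Real.pi * Complex.I * (s - k)) =
      Complex.exp (2 * Real.pi * Complex.I * s) := by
    have h1 : 2 * (Real.pi : ℂ) * Complex.I * (s - k) =
        2 * (Real.pi : ℂ) * Complex.I * s - ((k : ℤ) : ℂ) * (2 * Real.pi * Complex.I) := by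
      push_cast; ring
    rw [h1, Complex.exp_sub, Complex.exp_int_mul_two_pi_mul_I, div_one]
  rw [hexp] at hG
  -- put everything together
  calc ∑' m : ℕ, ((∑ μ ∈ Finset.range (m + 1), Q μ x * (cBM m (m - μ) k : ℂ)) /
          (m.factorial : ℂ)) * s ^ m
      = ∑' m : ℕ, ((-1) ^ k / (k.factorial : ℂ)) *
          ∑ ij ∈ Finset.HasAntidiagonal.antidiagonal m,
            ((mharm k ij.1 : ℂ) * s ^ ij.1) * (Q ij.2 x / (ij.2.factorial : ℂ) * s ^ ij.2) :=
        tsum_congr (fun m => term_eq k m x s Q)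
    _ = ((-1) ^ k / (k.factorial : ℂ)) *
          ∑' m : ℕ, ∑ ij ∈ Finset.HasAntidiagonal.antidiagonal m,
            ((mharm k ij.1 : ℂ) * s ^ ij.1) * (Q ij.2 x / (ij.2.factorial : ℂ) * s ^ ij.2) :=
        tsum_mul_left
    _ = ((-1) ^ k / (k.factorial : ℂ)) *
          ((∑' μ : ℕ, (mharm k μ : ℂ) * s ^ μ) *
            (∑' m : ℕ, Q m x / (m.factorial : ℂ) * s ^ m)) := by rw [← key]
    _ = ((-1) ^ k / (k.factorial : ℂ)) * (∑' μ : ℕ, (mharm k μ : ℂ) * s ^ μ) *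
          (Complex.exp (s * x) /
            (Complex.Gamma (s - k) * (Complex.exp (2 * Real.pi * Complex.I * s) - 1))) := by
        rw [← hG]
        ring
end

section
/- Let P_m(w) := ∑_{μ=0}^m c^m_{m−μ,k} · G_{μ,k}(w), where G_{μ,k}(w) = ∂_s^μ ζ(s,w)|_{s=−k} for a function ζ holomorphic in (s,w) satisfying ∂_w ζ(s,w) = −s ζ(s+1,w), and c^m_{μ,k} = ((−1)^k/k!)(m!/(m−μ)!)H_k(μ). Then ∂/∂w of ∑_{μ=0}^m c^m_{m−μ,k} G_{μ,k}(w) = −∑_{μ=0}^m c^m_{m−μ,k−1} G_{μ,k−1}(w) for all k ≥ 1. -/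
open Finset Complex

lemma mharm_zero_right (k : ℕ) : mharm k 0 = 1 := by
  simp [mharm]

lemma mharm_rec (k μ : ℕ) :
    mharm (k+1) (μ+1) = mharm k (μ+1) + 1/((k:ℚ)+1) * mharm (k+1) μ := by
  classical
  rw [mharm]
  rw [← Finset.sum_filter_add_sum_filter_not _
    (fun f : Fin (μ+1) → Fin (k+1) => f (Fin.last μ) = Fin.last k)]
  have hB : ∑ f ∈ (Finset.univ.filter
      (fun f : Fin (μ+1) → Fin (k+1) => ∀ i j, i ≤ j → f i ≤ f j)).filter
      (fun f => ¬ f (Fin.last μ) = Fin.last k), ∏ i, (1 : ℚ) / ((f i : ℕ) + 1)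
      = mharm k (μ+1) := by
    rw [mharm]
    apply Finset.sum_bij (i := fun (f : Fin (μ+1) → Fin (k+1)) hf (j : Fin (μ+1)) =>
      Fin.castLT (f j) (by
        simp only [Finset.mem_filter, Finset.mem_univ, true_and] at hf
        have h1 : f j ≤ f (Fin.last μ) := hf.1 j (Fin.last μ) (Fin.le_last j)
        have h2 : f (Fin.last μ) < Fin.last k := lt_of_le_of_ne (Fin.le_last _) hf.2
        exact lt_of_le_of_lt h1 h2))
    · intro f hf
      simp only [Finset.mem_filter, Finset.mem_univ, true_and] at hf ⊢
      intro i j hij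
      exact hf.1 i j hij
    · intro f hf g hg h
      funext j
      have h2 := congrFun h j
      rw [Fin.ext_iff] at h2 ⊢
      simpa using h2
    · intro g hg
      simp only [Finset.mem_filter, Finset.mem_univ, true_and] at hg
      refine ⟨fun j => Fin.castSucc (g j), ?_, ?_⟩
      · simp only [Finset.mem_filter, Finset.mem_univ, true_and]
        refine ⟨fun i j hij => ?_, ?_⟩
        · exact Fin.castSucc_le_castSucc_iff.mpr (hg i j hij)
        · exact ne_of_lt (Fin.castSucc_lt_last _)
      · funext j; ext; simp
    · intro f hf
      apply Finset.prod_congr rfl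
      intro j _
      simp [Fin.castLT]
  have hA : ∑ f ∈ (Finset.univ.filter
      (fun f : Fin (μ+1) → Fin (k+1) => ∀ i j, i ≤ j → f i ≤ f j)).filter
      (fun f => f (Fin.last μ) = Fin.last k), ∏ i, (1 : ℚ) / ((f i : ℕ) + 1)
      = 1/((k:ℚ)+1) * mharm (k+1) μ := by
    rw [mharm, Finset.mul_sum]
    apply Finset.sum_bij (i := fun (f : Fin (μ+1) → Fin (k+1)) _ (j : Fin μ) =>
      f (Fin.castSucc j))
    · intro f hf
      simp only [Finset.mem_filter, Finset.mem_univ, true_and] at hf ⊢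
      intro i j hij
      exact hf.1 _ _ (Fin.castSucc_le_castSucc_iff.mpr hij)
    · intro f hf g hg h
      simp only [Finset.mem_filter, Finset.mem_univ, true_and] at hf hg
      funext j
      refine Fin.lastCases ?_ ?_ j
      · rw [hf.2, hg.2]
      · intro i; exact congrFun h i
    · intro g hg
      simp only [Finset.mem_filter, Finset.mem_univ, true_and] at hg
      refine ⟨Fin.snoc g (Fin.last k), ?_, ?_⟩
      · simp only [Finset.mem_filter, Finset.mem_univ, true_and]
        constructor
        · intro i j
          refine Fin.lastCases ?_ (fun j' => ?_) j
          · intro _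
            rw [Fin.snoc_last]
            exact Fin.le_last _
          · refine Fin.lastCases ?_ (fun i' => ?_) i
            · intro h
              exact absurd h (not_le.mpr (Fin.castSucc_lt_last j'))
            · intro h
              simp only [Fin.snoc_castSucc]
              exact hg _ _ (Fin.castSucc_le_castSucc_iff.mp h)
        · simp [Fin.snoc_last]
      · funext j; simp [Fin.snoc_castSucc]
    · intro f hf
      simp only [Finset.mem_filter, Finset.mem_univ, true_and] at hf
      rw [Fin.prod_univ_castSucc]
      rw [hf.2]
      simp only [Fin.val_last]
      ring
  rw [hA, hB]
  ring

lemma key0 (m K : ℕ) :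
    ((K:ℚ)+1) * cBM m 0 (K+1) = - cBM m 0 K := by
  simp only [cBM, mharm_zero_right, Nat.sub_zero, Nat.factorial_succ]
  have h1 : ((K.factorial : ℚ)) ≠ 0 := Nat.cast_ne_zero.mpr K.factorial_ne_zero
  have h2 : ((m.factorial : ℚ)) ≠ 0 := Nat.cast_ne_zero.mpr m.factorial_ne_zero
  push_cast
  field_simp
  ring

lemma key1 (m μ K : ℕ) (hμ : μ < m) :
    ((K:ℚ)+1) * cBM m (m-μ) (K+1) = ((μ:ℚ)+1) * cBM m (m-μ-1) (K+1) - cBM m (m-μ) K := by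
  have e1 : m - μ = (m - μ - 1) + 1 := by omega
  have e2 : m - (m - μ) = μ := by omega
  have e3 : m - (m - μ - 1) = μ + 1 := by omega
  simp only [cBM, e2, e3]
  rw [e1, mharm_rec K (m - μ - 1), ← e1]
  have h1 : ((K.factorial : ℚ)) ≠ 0 := Nat.cast_ne_zero.mpr K.factorial_ne_zero
  have h2 : ((μ.factorial : ℚ)) ≠ 0 := Nat.cast_ne_zero.mpr μ.factorial_ne_zero
  have hK1 : ((K:ℚ)+1) ≠ 0 := by positivity
  have hμ1 : ((μ:ℚ)+1) ≠ 0 := by positivity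
  simp only [Nat.factorial_succ]
  push_cast
  field_simp
  ring

lemma sum_id (m K : ℕ) (a : ℕ → ℂ) :
    ∑ μ ∈ Finset.range (m+1), (cBM m (m-μ) (K+1) : ℂ) * (((K:ℂ)+1) * a μ - (μ:ℂ) * a (μ-1)) =
      -∑ μ ∈ Finset.range (m+1), (cBM m (m-μ) K : ℂ) * a μ := by
  rw [eq_neg_iff_add_eq_zero, ← Finset.sum_add_distrib]
  have key : ∀ μ ∈ Finset.range (m+1),
      (cBM m (m-μ) (K+1) : ℂ) * (((K:ℂ)+1) * a μ - (μ:ℂ) * a (μ-1)) + (cBM m (m-μ) K : ℂ) * a μ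
        = (if μ < m then ((μ:ℂ)+1) * (cBM m (m-μ-1) (K+1) : ℂ) else 0) * a μ
          - (cBM m (m-μ) (K+1) : ℂ) * (μ:ℂ) * a (μ-1) := by
    intro μ hμ
    by_cases h : μ < m
    · have hq := key1 m μ K h
      have hC : ((K:ℂ)+1) * (cBM m (m-μ) (K+1) : ℂ)
          = ((μ:ℂ)+1) * (cBM m (m-μ-1) (K+1) : ℂ) - (cBM m (m-μ) K : ℂ) := by
        exact_mod_cast congrArg (fun q : ℚ => (q : ℂ)) hq
      rw [if_pos h]
      linear_combination a μ * hC
    · have hμm : μ = m := by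
        have := Finset.mem_range.mp hμ; omega
      have hq := key0 m K
      have hC : ((K:ℂ)+1) * (cBM m 0 (K+1) : ℂ) = -(cBM m 0 K : ℂ) := by
        exact_mod_cast congrArg (fun q : ℚ => (q : ℂ)) hq
      rw [if_neg h, hμm, Nat.sub_self]
      linear_combination a m * hC
  rw [Finset.sum_congr rfl key, Finset.sum_sub_distrib]
  have hd : ∑ μ ∈ Finset.range (m+1),
      (if μ < m then ((μ:ℂ)+1) * (cBM m (m-μ-1) (K+1) : ℂ) else 0) * a μ
      = ∑ μ ∈ Finset.range m, ((μ:ℂ)+1) * (cBM m (m-μ-1) (K+1) : ℂ) * a μ := by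
    rw [Finset.sum_range_succ, if_neg (lt_irrefl m), zero_mul, add_zero]
    exact Finset.sum_congr rfl fun μ hμ => by rw [if_pos (Finset.mem_range.mp hμ)]
  have he : ∑ μ ∈ Finset.range (m+1), (cBM m (m-μ) (K+1) : ℂ) * (μ:ℂ) * a (μ-1)
      = ∑ μ ∈ Finset.range m, ((μ:ℂ)+1) * (cBM m (m-μ-1) (K+1) : ℂ) * a μ := by
    rw [Finset.sum_range_succ']
    simp only [Nat.cast_zero, mul_zero, zero_mul, add_zero]
    refine Finset.sum_congr rfl fun μ _ => ?_
    rw [Nat.sub_sub]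
    push_cast
    ring
  rw [hd, he, sub_self]

/-- The joint partial `s`-jet of `ζ`: `pjet ζ μ (s,w) = ∂_s^μ ζ(s,w)`. -/
noncomputable def pjet (ζ : ℂ → ℂ → ℂ) : ℕ → (ℂ × ℂ) → ℂ
  | 0 => fun p => ζ p.1 p.2
  | μ+1 => fun p => fderiv ℂ (pjet ζ μ) p (1, 0)

lemma pjet_analytic {ζ : ℂ → ℂ → ℂ}
    (hζ : AnalyticOnNhd ℂ (fun p : ℂ × ℂ => ζ p.1 p.2) Set.univ) (μ : ℕ) :
    AnalyticOnNhd ℂ (pjet ζ μ) Set.univ := by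
  induction μ with
  | zero => exact hζ
  | succ n ih =>
    intro x hx
    have h1 : AnalyticAt ℂ (fderiv ℂ (pjet ζ n)) x := (ih.fderiv) x hx
    have h2 : AnalyticAt ℂ (fun L : (ℂ × ℂ) →L[ℂ] ℂ => L ((1:ℂ), (0:ℂ)))
        (fderiv ℂ (pjet ζ n) x) :=
      (ContinuousLinearMap.apply ℂ ℂ ((1:ℂ), (0:ℂ))).analyticAt _
    exact h2.comp h1

lemma sliceS {f : ℂ × ℂ → ℂ} {s w : ℂ} (hf : DifferentiableAt ℂ f (s, w)) :
    HasDerivAt (fun t => f (t, w)) (fderiv ℂ f (s, w) (1, 0)) s := by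
  have hg : HasFDerivAt (fun t : ℂ => (t, w)) ((ContinuousLinearMap.id ℂ ℂ).prod 0) s :=
    (hasFDerivAt_id s).prodMk (hasFDerivAt_const w s)
  have h := (hf.hasFDerivAt.comp s hg).hasDerivAt
  exact h

lemma sliceW {f : ℂ × ℂ → ℂ} {s w : ℂ} (hf : DifferentiableAt ℂ f (s, w)) :
    HasDerivAt (fun t => f (s, t)) (fderiv ℂ f (s, w) (0, 1)) w := by
  have hg : HasFDerivAt (fun t : ℂ => (s, t))
      ((0 : ℂ →L[ℂ] ℂ).prod (ContinuousLinearMap.id ℂ ℂ)) w :=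
    (hasFDerivAt_const s w).prodMk (hasFDerivAt_id w)
  have h := (hf.hasFDerivAt.comp w hg).hasDerivAt
  exact h

lemma pjet_slice {ζ : ℂ → ℂ → ℂ}
    (hζ : AnalyticOnNhd ℂ (fun p : ℂ × ℂ => ζ p.1 p.2) Set.univ) (μ : ℕ) (s w : ℂ) :
    iteratedDeriv μ (fun s => ζ s w) s = pjet ζ μ (s, w) := by
  induction μ generalizing s with
  | zero => simp [pjet]
  | succ n ih =>
    rw [iteratedDeriv_succ]
    have hfun : iteratedDeriv n (fun s => ζ s w) = fun t => pjet ζ n (t, w) :=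
      funext fun t => ih t
    rw [hfun]
    have hdiff : DifferentiableAt ℂ (pjet ζ n) (s, w) :=
      ((pjet_analytic hζ n) (s, w) trivial).differentiableAt
    exact (sliceS hdiff).deriv

lemma pjet_w {ζ : ℂ → ℂ → ℂ}
    (hζ : AnalyticOnNhd ℂ (fun p : ℂ × ℂ => ζ p.1 p.2) Set.univ)
    (hrec : ∀ s w : ℂ, deriv (fun w' => ζ s w') w = -s * ζ (s + 1) w) (μ : ℕ) :
    ∀ s w : ℂ, fderiv ℂ (pjet ζ μ) (s, w) (0, 1)
      = -s * pjet ζ μ (s+1, w) - (μ:ℂ) * pjet ζ (μ-1) (s+1, w) := by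
  induction μ with
  | zero =>
    intro s w
    have hdiff : DifferentiableAt ℂ (pjet ζ 0) (s, w) :=
      ((pjet_analytic hζ 0) (s, w) trivial).differentiableAt
    have h := (sliceW hdiff).deriv
    rw [← h]
    have : (fun t => pjet ζ 0 (s, t)) = fun w' => ζ s w' := rfl
    rw [this, hrec s w]
    simp [pjet]
  | succ n ih =>
    intro s w
    have hAn := pjet_analytic hζ n
    have hfd : AnalyticOnNhd ℂ (fderiv ℂ (pjet ζ n)) Set.univ := hAn.fderiv
    have hder2 : DifferentiableAt ℂ (fderiv ℂ (pjet ζ n)) (s, w) :=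
      (hfd _ trivial).differentiableAt
    have hsym : IsSymmSndFDerivAt ℂ (pjet ζ n) (s, w) :=
      ((hAn (s, w) trivial).contDiffAt (n := 2)).isSymmSndFDerivAt (by simp)
    have heq1 : fderiv ℂ (pjet ζ (n+1)) (s, w) (0, 1)
        = fderiv ℂ (fderiv ℂ (pjet ζ n)) (s, w) (0, 1) (1, 0) := by
      have h1 := ((ContinuousLinearMap.apply ℂ ℂ ((1:ℂ), (0:ℂ))).hasFDerivAt
        (x := fderiv ℂ (pjet ζ n) (s, w))).comp (s, w) hder2.hasFDerivAt
      have h2 : pjet ζ (n+1)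
          = (ContinuousLinearMap.apply ℂ ℂ ((1:ℂ), (0:ℂ))) ∘ (fderiv ℂ (pjet ζ n)) := rfl
      rw [h2, h1.fderiv]
      simp
    set H : ℂ × ℂ → ℂ := fun p => fderiv ℂ (pjet ζ n) p ((0:ℂ), (1:ℂ)) with hH
    have heq3 : fderiv ℂ H (s, w) (1, 0)
        = fderiv ℂ (fderiv ℂ (pjet ζ n)) (s, w) (1, 0) (0, 1) := by
      have h1 := ((ContinuousLinearMap.apply ℂ ℂ ((0:ℂ), (1:ℂ))).hasFDerivAt
        (x := fderiv ℂ (pjet ζ n) (s, w))).comp (s, w) hder2.hasFDerivAt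
      have h2 : H = (ContinuousLinearMap.apply ℂ ℂ ((0:ℂ), (1:ℂ))) ∘ (fderiv ℂ (pjet ζ n)) := rfl
      rw [h2, h1.fderiv]
      simp
    have hHdiff : DifferentiableAt ℂ H (s, w) :=
      ((ContinuousLinearMap.apply ℂ ℂ ((0:ℂ), (1:ℂ))).differentiableAt).comp _ hder2
    have heq4 : fderiv ℂ H (s, w) (1, 0) = deriv (fun t => H (t, w)) s :=
      ((sliceS hHdiff).deriv).symm
    have hHfun : (fun t => H (t, w))
        = fun t => -t * pjet ζ n (t+1, w) - (n:ℂ) * pjet ζ (n-1) (t+1, w) :=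
      funext fun t => ih t w
    have hdiffn1 : DifferentiableAt ℂ (pjet ζ n) (s+1, w) :=
      (hAn (s+1, w) trivial).differentiableAt
    have hdiffn1' : DifferentiableAt ℂ (pjet ζ (n-1)) (s+1, w) :=
      ((pjet_analytic hζ (n-1)) (s+1, w) trivial).differentiableAt
    have hA : HasDerivAt (fun t : ℂ => pjet ζ n (t+1, w)) (pjet ζ (n+1) (s+1, w)) s := by
      have h0 : HasDerivAt (fun t => pjet ζ n (t, w))
          (fderiv ℂ (pjet ζ n) (s+1, w) (1, 0)) (s+1) := sliceS hdiffn1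
      have hshift : HasDerivAt (fun t : ℂ => t + 1) 1 s := (hasDerivAt_id s).add_const 1
      have h3 := HasDerivAt.comp s h0 hshift
      have h4 : pjet ζ (n+1) (s+1, w) = fderiv ℂ (pjet ζ n) (s+1, w) (1, 0) := rfl
      rw [h4]
      simp only [mul_one] at h3
      exact h3
    have hB : HasDerivAt (fun t : ℂ => pjet ζ (n-1) (t+1, w)) (pjet ζ ((n-1)+1) (s+1, w)) s := by
      have h0 : HasDerivAt (fun t => pjet ζ (n-1) (t, w))
          (fderiv ℂ (pjet ζ (n-1)) (s+1, w) (1, 0)) (s+1) := sliceS hdiffn1'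
      have hshift : HasDerivAt (fun t : ℂ => t + 1) 1 s := (hasDerivAt_id s).add_const 1
      have h3 := HasDerivAt.comp s h0 hshift
      have h4 : pjet ζ ((n-1)+1) (s+1, w) = fderiv ℂ (pjet ζ (n-1)) (s+1, w) (1, 0) := rfl
      rw [h4]
      simp only [mul_one] at h3
      exact h3
    have hneg : HasDerivAt (fun t : ℂ => -t) (-1) s := (hasDerivAt_id s).neg
    have htot : HasDerivAt (fun t : ℂ => -t * pjet ζ n (t+1, w) - (n:ℂ) * pjet ζ (n-1) (t+1, w))
        ((-1) * pjet ζ n (s+1, w) + (-s) * pjet ζ (n+1) (s+1, w)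
          - (n:ℂ) * pjet ζ ((n-1)+1) (s+1, w)) s :=
      (hneg.mul hA).sub (hB.const_mul (n:ℂ))
    have hcoef : (n:ℂ) * pjet ζ ((n-1)+1) (s+1, w) = (n:ℂ) * pjet ζ n (s+1, w) := by
      cases n with
      | zero => simp
      | succ p => norm_num
    rw [heq1, hsym (0,1) (1,0), ← heq3, heq4, hHfun, htot.deriv, hcoef]
    push_cast
    ring

/-- The balanced Kinkelin hierarchy `∂_w P_{m,k} = −P_{m,k−1}`: with
`G_{μ,k}(w) = ∂_s^μ ζ(s,w)|_{s=−k}` for a `ζ` entire in `(s,w)` with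
`∂_w ζ(s,w) = −s·ζ(s+1,w)`, and `P_{m,k}(w) = ∑_{μ=0}^m c^m_{m−μ,k}·G_{μ,k}(w)`,
one has `∂_w P_{m,k}(w) = −P_{m,k−1}(w)` for all `k ≥ 1`. -/
theorem balanced_hierarchy (ζ : ℂ → ℂ → ℂ)
    (hζ : AnalyticOn ℂ (fun p : ℂ × ℂ => ζ p.1 p.2) Set.univ)
    (hrec : ∀ s w : ℂ, deriv (fun w' => ζ s w') w = -s * ζ (s + 1) w)
    (m k : ℕ) (hk : 1 ≤ k) (w : ℂ) :
    deriv (fun w' : ℂ => ∑ μ ∈ Finset.range (m + 1),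
        (cBM m (m - μ) k : ℂ) * iteratedDeriv μ (fun s => ζ s w') (-(k : ℂ))) w =
      -∑ μ ∈ Finset.range (m + 1),
        (cBM m (m - μ) (k - 1) : ℂ) * iteratedDeriv μ (fun s => ζ s w) (-((k : ℂ) - 1)) := by
  have hζ' : AnalyticOnNhd ℂ (fun p : ℂ × ℂ => ζ p.1 p.2) Set.univ :=
    (analyticOn_univ).mp hζ
  obtain ⟨K, rfl⟩ : ∃ K, k = K + 1 := ⟨k - 1, (Nat.succ_pred_eq_of_pos hk).symm⟩
  set c : ℂ := -((K + 1 : ℕ) : ℂ) with hc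
  have hfun : (fun w' : ℂ => ∑ μ ∈ Finset.range (m + 1),
      (cBM m (m - μ) (K + 1) : ℂ) * iteratedDeriv μ (fun s => ζ s w') (-((K + 1 : ℕ) : ℂ)))
      = fun w' : ℂ => ∑ μ ∈ Finset.range (m + 1),
        (cBM m (m - μ) (K + 1) : ℂ) * pjet ζ μ (c, w') :=
    funext fun w' => Finset.sum_congr rfl fun μ _ => by rw [pjet_slice hζ' μ _ w']
  rw [hfun]
  have hder : ∀ μ ∈ Finset.range (m + 1),
      HasDerivAt (fun w' : ℂ => (cBM m (m - μ) (K + 1) : ℂ) * pjet ζ μ (c, w'))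
        ((cBM m (m - μ) (K + 1) : ℂ) * fderiv ℂ (pjet ζ μ) (c, w) (0, 1)) w := by
    intro μ _
    have hdiff : DifferentiableAt ℂ (pjet ζ μ) (c, w) :=
      ((pjet_analytic hζ' μ) (c, w) trivial).differentiableAt
    exact (sliceW hdiff).const_mul _
  have hsum := HasDerivAt.fun_sum hder
  rw [hsum.deriv]
  have hcK : -c = (K : ℂ) + 1 := by rw [hc]; push_cast; ring
  have hterm : ∀ μ ∈ Finset.range (m + 1),
      (cBM m (m - μ) (K + 1) : ℂ) * fderiv ℂ (pjet ζ μ) (c, w) (0, 1)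
        = (cBM m (m - μ) (K + 1) : ℂ) * (((K : ℂ) + 1) * pjet ζ μ (c + 1, w)
            - (μ : ℂ) * pjet ζ (μ - 1) (c + 1, w)) := by
    intro μ _
    rw [pjet_w hζ' hrec μ c w, ← hcK]
  rw [Finset.sum_congr rfl hterm, sum_id m K (fun ν => pjet ζ ν (c + 1, w))]
  congr 1
  refine Finset.sum_congr rfl fun μ _ => ?_
  have hKc : ((K + 1 : ℕ) : ℂ) - 1 = (K : ℂ) := by push_cast; ring
  have hpt : -(((K + 1 : ℕ) : ℂ) - 1) = c + 1 := by rw [hc]; push_cast; ring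
  rw [Nat.add_sub_cancel, hpt, pjet_slice hζ' μ _ w]
end
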